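/- Let (X,Σ) be a full difference scheme with Σ finite. Then for any point x ∈ X, the orbit of x under the semigroup generated by Σ is finite; in fact if x ∈ X^{τ₁} for some τ₁ ∈ Σ, then the orbit equals O(x) = {σx : σ ∈ Σ}, which has at most |Σ| elements. -/

import Mathlib

/-- The orbit of `x` under the semigroup generated by `Sg`: all images of `x` under
nonempty words in `Sg`. -/
def semigroupOrbit {X : Type*} (Sg : Set (X → X)) (x : X) : Set X :=
  {y | ∃ l : List (X → X), l ≠ [] ∧ (∀ f ∈ l, f ∈ Sg) ∧
    y = l.foldr (fun f z => f z) x}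

/-- on a full difference scheme `(X, Σ)` with `Σ` finite (every point
fixed by some `τ ∈ Σ`), the semigroup orbit of any point `x` is finite; in fact it
equals `O(x) = {σ x : σ ∈ Σ}`, which has at most `|Σ|` elements. -/
theorem semigroupOrbit_eq_image_of_full
    {X : Type*} (Sg : Set (X → X)) (hfin : Sg.Finite)
    (hregInj : ∀ σ ∈ Sg, ∀ τ₁ ∈ Sg, ∀ τ₂ ∈ Sg, τ₁ ∘ σ = τ₂ ∘ σ → τ₁ = τ₂)
    (hfull : ∀ τ ∈ Sg, ∀ τ' ∈ Sg, ∀ σ ∈ Sg, ∃ ρ ∈ Sg, σ ∘ τ' = τ ∘ ρ)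
    (hfullSurj : ∀ τ ∈ Sg, ∀ τ' ∈ Sg, ∀ ρ ∈ Sg, ∃ σ ∈ Sg, σ ∘ τ' = τ ∘ ρ)
    (hcover : ∀ x : X, ∃ τ ∈ Sg, τ x = x) :
    ∀ x : X,
      semigroupOrbit Sg x = (fun σ => σ x) '' Sg ∧
      (semigroupOrbit Sg x).Finite ∧
      (semigroupOrbit Sg x).ncard ≤ Sg.ncard := by
  intro x
  obtain ⟨τ₁, hτ₁, hτ₁x⟩ := hcover x
  -- key absorption: σ (ρ x) = σ' x for some σ' ∈ Sg
  have key : ∀ σ ∈ Sg, ∀ ρ ∈ Sg, ∃ σ' ∈ Sg, σ (ρ x) = σ' x := by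
    intro σ hσ ρ hρ
    obtain ⟨σ', hσ', heq⟩ := hfullSurj σ hσ τ₁ hτ₁ ρ hρ
    refine ⟨σ', hσ', ?_⟩
    have := congrFun heq x
    simp only [Function.comp_apply, hτ₁x] at this
    exact this.symm
  have main : ∀ l : List (X → X), l ≠ [] → (∀ f ∈ l, f ∈ Sg) →
      ∃ ρ ∈ Sg, l.foldr (fun f z => f z) x = ρ x := by
    intro l
    induction l with
    | nil => intro h; exact absurd rfl h
    | cons f t ih =>
      intro _ hmem
      have hf : f ∈ Sg := hmem f List.mem_cons_self
      cases t with
      | nil => exact ⟨f, hf, rfl⟩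
      | cons g s =>
        obtain ⟨ρ, hρ, hρx⟩ := ih (by simp) (fun a ha => hmem a (List.mem_cons_of_mem f ha))
        obtain ⟨σ', hσ', hσ'x⟩ := key f hf ρ hρ
        exact ⟨σ', hσ', by simp only [List.foldr_cons] at hρx ⊢; rw [hρx, hσ'x]⟩
  have heq : semigroupOrbit Sg x = (fun σ => σ x) '' Sg := by
    ext y
    constructor
    · rintro ⟨l, hne, hmem, rfl⟩
      obtain ⟨ρ, hρ, hρx⟩ := main l hne hmem
      exact ⟨ρ, hρ, hρx.symm⟩
    · rintro ⟨σ, hσ, rfl⟩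
      exact ⟨[σ], by simp, by simpa using hσ, rfl⟩
  refine ⟨heq, ?_, ?_⟩
  · rw [heq]; exact hfin.image _
  · rw [heq]; exact Set.ncard_image_le hfin
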